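/- Let k ≥ 2, H ≥ 2, δ ∈ (0,1/8). Suppose p ∈ [0,1] satisfies n·p^{H-1} ≤ k-1 where Z_l ~ Bin(n, p^l). Then (Σ_{l=0}^{H-1} 2^{l+1}·P(Z_l ≤ k-1)) / (2^{H+1} - 1) ≥ 1/4 > δ. Consequently, any p satisfying the near-broadcast condition (LHS ≤ δ) must satisfy p > ((k-1)/n)^{1/(H-1)}. -/

import Mathlib

open Finset intervalIntegral Real

noncomputable def S (n k : ℕ) (q : ℝ) : ℝ :=
  ∑ i ∈ Finset.range k, (n.choose i : ℝ) * q ^ i * (1 - q) ^ (n - i)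

lemma cont_g (a c : ℕ) : Continuous (fun t : ℝ => t^a * (1-t)^c) :=
  (continuous_pow a).mul ((continuous_const.sub continuous_id).pow c)

lemma intg (a c : ℕ) (x y : ℝ) :
    IntervalIntegrable (fun t : ℝ => t^a * (1-t)^c) MeasureTheory.volume x y :=
  (cont_g a c).intervalIntegrable x y

lemma hasDeriv_g (a N : ℕ) (t : ℝ) :
    HasDerivAt (fun t : ℝ => t^(a+1) * (1-t)^N)
      (((a:ℝ)+1) * t^a * (1-t)^N - (N:ℝ) * t^(a+1) * (1-t)^(N-1)) t := by
  have h1 : HasDerivAt (fun t : ℝ => t^(a+1)) (((a:ℝ)+1) * t^a) t := by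
    have := hasDerivAt_pow (a+1) t
    simpa using this
  have h0 : HasDerivAt (fun t : ℝ => 1 - t) (-1) t := by
    simpa using (hasDerivAt_id t).const_sub 1
  have h2 : HasDerivAt (fun t : ℝ => (1-t)^N) ((N:ℝ) * (1-t)^(N-1) * (-1)) t := h0.pow N
  have := h1.mul h2
  refine this.congr_deriv ?_
  ring

lemma ident (n : ℕ) : ∀ m, m + 1 ≤ n → ∀ q : ℝ,
    S n (m+1) q = 1 - ((n-m:ℕ):ℝ) * (n.choose m : ℝ) *
      ∫ t in (0:ℝ)..q, t^m * (1-t)^(n-m-1) := by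
  intro m
  induction m with
  | zero =>
    intro hn q
    have hder : ∀ t : ℝ, HasDerivAt (fun t : ℝ => -(1-t)^n) ((n:ℝ) * (1-t)^(n-1)) t := by
      intro t
      have h0 : HasDerivAt (fun t : ℝ => 1 - t) (-1) t := by
        simpa using (hasDerivAt_id t).const_sub 1
      have h2 := (h0.pow n).neg
      refine h2.congr_deriv ?_
      ring
    have hcont : Continuous fun t : ℝ => (n:ℝ) * (1-t)^(n-1) :=
      continuous_const.mul ((continuous_const.sub continuous_id).pow (n-1))
    have hFTC := integral_eq_sub_of_hasDerivAt (f := fun t : ℝ => -(1-t)^n)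
      (fun x _ => hder x) (hcont.intervalIntegrable 0 q)
    have hc : ∫ t in (0:ℝ)..q, (n:ℝ) * (1-t)^(n-1)
        = (n:ℝ) * ∫ t in (0:ℝ)..q, (1-t)^(n-1) := integral_const_mul _ _
    rw [hc] at hFTC
    have hI : ∫ t in (0:ℝ)..q, t^0 * (1-t)^(n-0-1) = ∫ t in (0:ℝ)..q, (1-t)^(n-1) := by
      norm_num
    have hS : S n (0+1) q = (1-q)^n := by
      rw [S]
      norm_num
    rw [hS, hI]
    have : (0:ℝ)-1 = -1 := by norm_num
    simp only [sub_zero, one_pow] at hFTC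
    simp only [Nat.sub_zero, Nat.choose_zero_right, Nat.cast_one, mul_one]
    linarith [hFTC]
  | succ m IH =>
    intro hn q
    have hmn : m + 1 ≤ n := by omega
    set I1 : ℝ := ∫ t in (0:ℝ)..q, t^m * (1-t)^(n-m-1) with hI1
    set I2 : ℝ := ∫ t in (0:ℝ)..q, t^(m+1) * (1-t)^(n-m-2) with hI2
    have hder' : ∀ t : ℝ, HasDerivAt (fun t : ℝ => t^(m+1) * (1-t)^(n-m-1))
        (((m:ℝ)+1) * (t^m * (1-t)^(n-m-1)) - ((n-m-1:ℕ):ℝ) * (t^(m+1) * (1-t)^(n-m-2))) t := by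
      intro t
      have h := hasDeriv_g m (n-m-1) t
      have e : ((m:ℝ)+1) * t^m * (1-t)^(n-m-1) - ((n-m-1:ℕ):ℝ) * t^(m+1) * (1-t)^(n-m-1-1)
          = ((m:ℝ)+1) * (t^m * (1-t)^(n-m-1)) - ((n-m-1:ℕ):ℝ) * (t^(m+1) * (1-t)^(n-m-2)) := by
        have e2 : n-m-1-1 = n-m-2 := by omega
        rw [e2]; ring
      rw [e] at h
      exact h
    have hint : IntervalIntegrable (fun t : ℝ =>
        ((m:ℝ)+1) * (t^m * (1-t)^(n-m-1)) - ((n-m-1:ℕ):ℝ) * (t^(m+1) * (1-t)^(n-m-2)))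
        MeasureTheory.volume 0 q :=
      ((continuous_const.mul (cont_g m (n-m-1))).sub (continuous_const.mul (cont_g (m+1) (n-m-2)))).intervalIntegrable 0 q
    have hFTC := integral_eq_sub_of_hasDerivAt (fun x _ => hder' x) hint
    have hIBP : q^(m+1) * (1-q)^(n-m-1) = ((m:ℝ)+1) * I1 - ((n-m-1:ℕ):ℝ) * I2 := by
      rw [hI1, hI2, ← integral_const_mul, ← integral_const_mul,
        ← integral_sub (f := fun t => ((m:ℝ)+1) * (t^m * (1-t)^(n-m-1)))
          (g := fun t => ((n-m-1:ℕ):ℝ) * (t^(m+1) * (1-t)^(n-m-2))) ((continuous_const.mul (cont_g m (n-m-1))).intervalIntegrable 0 q)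
          ((continuous_const.mul (cont_g (m+1) (n-m-2))).intervalIntegrable 0 q)]
      rw [hFTC]
      norm_num
    -- expand S
    have hSstep : S n (m+1+1) q = S n (m+1) q + (n.choose (m+1) : ℝ) * q^(m+1) * (1-q)^(n-(m+1)) := by
      rw [S, S, Finset.sum_range_succ]
    have hchoose : (n.choose (m+1) : ℝ) * ((m:ℝ)+1) = (n.choose m : ℝ) * ((n-m:ℕ):ℝ) := by
      exact_mod_cast congrArg (Nat.cast : ℕ → ℝ) (Nat.choose_succ_right_eq n m)
    have hIH := IH hmn q
    rw [hSstep, hIH]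
    have e3 : n-(m+1) = n-m-1 := by omega
    have e4 : n-(m+1)-1 = n-m-2 := by omega
    rw [e4, e3, ← hI2]
    have e5 : ((n-m-1:ℕ):ℝ) = ((n-m:ℕ):ℝ) - 1 := by
      rw [Nat.cast_sub (by omega : 1 ≤ n-m)]
      norm_num
    rw [← hI1]
    have expand : (n.choose (m+1) : ℝ) * q^(m+1) * (1-q)^(n-m-1)
        = ((n-m:ℕ):ℝ) * (n.choose m : ℝ) * I1 - ((n-m-1:ℕ):ℝ) * (n.choose (m+1):ℝ) * I2 := by
      calc (n.choose (m+1) : ℝ) * q^(m+1) * (1-q)^(n-m-1)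
          = (n.choose (m+1) : ℝ) * (q^(m+1) * (1-q)^(n-m-1)) := by ring
        _ = (n.choose (m+1) : ℝ) * (((m:ℝ)+1) * I1 - ((n-m-1:ℕ):ℝ) * I2) := by rw [hIBP]
        _ = ((n.choose (m+1) : ℝ) * ((m:ℝ)+1)) * I1 - ((n-m-1:ℕ):ℝ) * (n.choose (m+1):ℝ) * I2 := by ring
        _ = ((n-m:ℕ):ℝ) * (n.choose m : ℝ) * I1 - ((n-m-1:ℕ):ℝ) * (n.choose (m+1):ℝ) * I2 := by
            rw [hchoose]; ring
    linarith [expand]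

lemma refl_pt (m b : ℕ) (hm : 1 ≤ m) (hb : m < b) (X : ℝ) (hX0 : 0 ≤ X) (hXM : X ≤ (m:ℝ)) :
    ((m:ℝ)-X)^m * ((b:ℝ)+X)^(b-1) ≤ ((m:ℝ)+X)^m * ((b:ℝ)-X)^(b-1) := by
  set M : ℝ := (m:ℝ) with hMdef
  set B : ℝ := (b:ℝ) with hBdef
  have hM1 : (1:ℝ) ≤ M := by rw [hMdef]; exact_mod_cast hm
  have hBM : M + 1 ≤ B := by
    have : m + 1 ≤ b := hb
    rw [hMdef, hBdef]; exact_mod_cast this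
  rcases eq_or_lt_of_le hXM with heq | hXlt
  · -- X = M
    rw [heq]
    have h1 : (M - M) = 0 := by ring
    rw [h1, zero_pow (by omega : m ≠ 0), zero_mul]
    have h2 : (0:ℝ) ≤ M + M := by linarith
    have h3 : (0:ℝ) ≤ B - M := by linarith
    positivity
  · -- X < M : use log-monotonicity
    set F : ℝ → ℝ := fun x => m * Real.log (M+x) + ((b:ℕ)-1 : ℕ) * Real.log (B-x)
      - m * Real.log (M-x) - ((b:ℕ)-1 : ℕ) * Real.log (B+x) with hF
    set B1 : ℝ := (((b:ℕ)-1 : ℕ) : ℝ) with hB1def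
    have hB1 : B1 = B - 1 := by
      rw [hB1def, hBdef, Nat.cast_sub (by omega : 1 ≤ b)]; norm_num
    have hder : ∀ y ∈ Set.Icc (0:ℝ) X, HasDerivAt F
        (M/(M+y) + M/(M-y) - B1/(B-y) - B1/(B+y)) y := by
      intro y hy
      obtain ⟨hy0, hyX⟩ := hy
      have hMy : 0 < M - y := by linarith
      have hMy' : 0 < M + y := by linarith
      have hBy : 0 < B - y := by linarith
      have hBy' : 0 < B + y := by linarith
      have d1 : HasDerivAt (fun x : ℝ => M + x) 1 y := by
        simpa using (hasDerivAt_id y).const_add M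
      have d2 : HasDerivAt (fun x : ℝ => B - x) (-1) y := by
        simpa using (hasDerivAt_id y).const_sub B
      have d3 : HasDerivAt (fun x : ℝ => M - x) (-1) y := by
        simpa using (hasDerivAt_id y).const_sub M
      have d4 : HasDerivAt (fun x : ℝ => B + x) 1 y := by
        simpa using (hasDerivAt_id y).const_add B
      have l1 := (d1.log (ne_of_gt hMy')).const_mul (M)
      have l2 := (d2.log (ne_of_gt hBy)).const_mul (B1)
      have l3 := (d3.log (ne_of_gt hMy)).const_mul (M)
      have l4 := (d4.log (ne_of_gt hBy')).const_mul (B1)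
      have := ((l1.add l2).sub l3).sub l4
      have e : M * (1 / (M + y)) + B1 * (-1 / (B - y)) - M * (-1 / (M - y)) - B1 * (1 / (B + y))
          = M/(M+y) + M/(M-y) - B1/(B-y) - B1/(B+y) := by
        field_simp
        ring
      rw [e] at this
      exact this
    have hDnn : ∀ y ∈ Set.Icc (0:ℝ) X, 0 ≤ M/(M+y) + M/(M-y) - B1/(B-y) - B1/(B+y) := by
      intro y hy
      obtain ⟨hy0, hyX⟩ := hy
      have hMy : 0 < M - y := by linarith
      have hMy' : 0 < M + y := by linarith
      have hBy : 0 < B - y := by linarith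
      have hBy' : 0 < B + y := by linarith
      have e1 : M/(M+y) + M/(M-y) = (2*M^2)/((M+y)*(M-y)) := by
        field_simp
        ring
      have e2 : B1/(B-y) + B1/(B+y) = (B1*(2*B))/((B-y)*(B+y)) := by
        field_simp
        ring
      have hq : (B1*(2*B))/((B-y)*(B+y)) ≤ (2*M^2)/((M+y)*(M-y)) := by
        rw [div_le_div_iff₀ (by positivity) (by positivity), hB1]
        have hy2 : y^2 ≤ M^2 := by nlinarith
        rcases le_or_gt (M^2) (B^2 - B) with hcase | hcase
        · nlinarith [sq_nonneg y, mul_pos hMy hMy']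
        · nlinarith [mul_pos hBy hBy', sq_nonneg y]
      linarith [e1, e2, hq]
    have hmono : MonotoneOn F (Set.Icc 0 X) := by
      apply monotoneOn_of_deriv_nonneg (convex_Icc 0 X)
      · exact fun y hy => (hder y hy).continuousAt.continuousWithinAt
      · intro y hy
        rw [interior_Icc] at hy
        exact ((hder y (Set.mem_Icc_of_Ioo hy)).differentiableAt).differentiableWithinAt
      · intro y hy
        rw [interior_Icc] at hy
        rw [(hder y (Set.mem_Icc_of_Ioo hy)).deriv]
        exact hDnn y (Set.mem_Icc_of_Ioo hy)
    have hF0 : F 0 = 0 := by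
      simp only [hF]
      ring_nf
    have hFX : 0 ≤ F X := by
      have := hmono (Set.left_mem_Icc.mpr hX0) (Set.right_mem_Icc.mpr hX0) hX0
      rw [hF0] at this
      exact this
    -- exponentiate
    have hMX1 : 0 < M - X := by linarith
    have hMX2 : 0 < M + X := by linarith
    have hBX1 : 0 < B - X := by linarith
    have hBX2 : 0 < B + X := by linarith
    have hlog : Real.log (((M:ℝ)-X)^m * ((B:ℝ)+X)^(b-1)) ≤ Real.log (((M:ℝ)+X)^m * ((B:ℝ)-X)^(b-1)) := by
      rw [Real.log_mul (by positivity) (by positivity), Real.log_mul (by positivity) (by positivity),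
        Real.log_pow, Real.log_pow, Real.log_pow, Real.log_pow]
      have hFXe : F X = m * Real.log (M+X) + B1 * Real.log (B-X)
          - m * Real.log (M-X) - B1 * Real.log (B+X) := by rw [hF]
      rw [hFXe] at hFX
      rw [hB1def] at hFX
      linarith [hFX]
    rwa [Real.log_le_log_iff (by positivity) (by positivity)] at hlog

lemma sum_pmf (n : ℕ) (q : ℝ) : S n (n+1) q = 1 := by
  have h := add_pow q (1-q) n
  simp only [add_sub_cancel, one_pow] at h
  have e : S n (n+1) q = ∑ i ∈ Finset.range (n+1), q ^ i * (1 - q) ^ (n - i) * (n.choose i : ℝ) :=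
    Finset.sum_congr rfl fun i _ => by ring
  rw [e, ← h]

lemma pairing (n m : ℕ) (hm1 : 1 ≤ m) (hmn : m+1 ≤ n) (h2m : n ≤ 2*m) :
    ∀ j : ℕ, (n.choose (m+1+j) : ℝ) * (m:ℝ)^(2*j+1) ≤
      (n.choose (m-j) : ℝ) * ((n-m : ℕ):ℝ)^(2*j+1) := by
  intro j
  induction j with
  | zero =>
    have e := Nat.choose_succ_right_eq n m
    have e' : (n.choose (m+1) : ℝ) * ((m:ℝ)+1) = (n.choose m : ℝ) * ((n-m:ℕ):ℝ) := by
      exact_mod_cast congrArg (Nat.cast : ℕ → ℝ) e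
    have h0 : (n.choose (m+1) : ℝ) * (m:ℝ) ≤ (n.choose (m+1) : ℝ) * ((m:ℝ)+1) := by
      have : (0:ℝ) ≤ (n.choose (m+1) : ℝ) := Nat.cast_nonneg _
      nlinarith
    simpa using h0.trans e'.le
  | succ j IH =>
    by_cases hbig : n < m+2+j
    · have : n.choose (m+1+(j+1)) = 0 := Nat.choose_eq_zero_of_lt (by omega)
      rw [this]
      simp only [Nat.cast_zero, zero_mul]
      have hb : (0:ℝ) ≤ ((n-m:ℕ):ℝ) := Nat.cast_nonneg _
      positivity
    · push_neg at hbig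
      -- genuine indices
      have hjb : j + 2 ≤ n - m := by omega
      have hjm : j + 2 ≤ m := by omega
      set B : ℝ := ((n-m:ℕ):ℝ) with hB
      set M : ℝ := (m:ℝ) with hM
      set J : ℝ := (j:ℝ) with hJ
      have hBval : B = (n:ℝ) - M := by rw [hB, hM, Nat.cast_sub (by omega)]
      have hMB : B ≤ M := by
        have : n - m ≤ m := by omega
        rw [hB, hM]; exact_mod_cast this
      have hJB : J + 2 ≤ B := by
        rw [hJ, hB]; exact_mod_cast hjb
      have hJM : J + 2 ≤ M := by
        rw [hJ, hM]; exact_mod_cast hjm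
      have e1 : (n.choose (m+2+j) : ℝ) * (M+2+J) = (n.choose (m+1+j) : ℝ) * (B-1-J) := by
        have e := Nat.choose_succ_right_eq n (m+1+j)
        have e2 : ((n.choose (m+1+j+1)) : ℝ) * ((m+1+j:ℕ)+1 : ℕ) =
            (n.choose (m+1+j) : ℝ) * ((n - (m+1+j) : ℕ):ℝ) := by exact_mod_cast congrArg (Nat.cast : ℕ → ℝ) e
        have i1 : m+1+j+1 = m+2+j := by ring
        have i2 : ((n - (m+1+j) : ℕ):ℝ) = B - 1 - J := by
          rw [hB, hJ]
          rw [Nat.cast_sub (by omega), Nat.cast_sub (by omega)]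
          push_cast; ring
        rw [i1, i2] at e2
        rw [← e2]; push_cast; ring
      have e2 : (n.choose (m-j) : ℝ) * (M-J) = (n.choose (m-(j+1)) : ℝ) * (B+1+J) := by
        have e := Nat.choose_succ_right_eq n (m-j-1)
        have i1 : m-j-1+1 = m-j := by omega
        have i2 : m-(j+1) = m-j-1 := by omega
        rw [i1] at e
        have ec : ((n.choose (m-j)) : ℝ) * ((m-j : ℕ):ℝ) =
            (n.choose (m-j-1) : ℝ) * ((n - (m-j-1) : ℕ):ℝ) := by exact_mod_cast congrArg (Nat.cast : ℕ → ℝ) e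
        have c1 : ((m-j:ℕ):ℝ) = M - J := by
          rw [hM, hJ, Nat.cast_sub (by omega)]
        have c2 : ((n - (m-j-1) : ℕ):ℝ) = B + 1 + J := by
          have : n - (m-j-1) = (n-m) + (j+1) := by omega
          rw [this, hB, hJ]; push_cast; ring
        rw [i2, ← c1, ← c2]
        exact ec
      -- nonnegativity facts
      have hC0 : (0:ℝ) ≤ (n.choose (m-j) : ℝ) := Nat.cast_nonneg _
      have hC1 : (0:ℝ) ≤ (n.choose (m+1+j) : ℝ) := Nat.cast_nonneg _
      have hX : (0:ℝ) ≤ (n.choose (m+2+j) : ℝ) := Nat.cast_nonneg _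
      have hY : (0:ℝ) ≤ (n.choose (m-(j+1)) : ℝ) := Nat.cast_nonneg _
      have hM0 : (0:ℝ) < M := by rw [hM]; exact_mod_cast hm1
      have hB0 : (0:ℝ) < B := by linarith
      have hJ0 : (0:ℝ) ≤ J := Nat.cast_nonneg _
      -- scalar inequality
      have scalar : (B-1-J)*(B+1+J)*M^2 ≤ (M-J)*(M+2+J)*B^2 := by
        nlinarith [sq_nonneg (J+1), sq_nonneg B, sq_nonneg M, mul_nonneg (mul_nonneg hJ0 hJ0) (sq_nonneg B),
          mul_nonneg (sq_nonneg (J+1)) (mul_nonneg (sub_nonneg.2 hMB) (by linarith : (0:ℝ) ≤ M + B))]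
      -- index/exponent normalizations for the goal
      have i3 : m+1+(j+1) = m+2+j := by ring
      have i4 : 2*(j+1)+1 = (2*j+1)+2 := by ring
      rw [i3, i4, pow_add M (2*j+1) 2, pow_add B (2*j+1) 2]
      have hpowM : (0:ℝ) ≤ M^(2*j+1) := by positivity
      have hpowB : (0:ℝ) ≤ B^(2*j+1) := by positivity
      have hc : (0:ℝ) < (M+2+J)*(B+1+J) := by positivity
      refine le_of_mul_le_mul_right ?_ hc
      have expand1 : (n.choose (m+2+j) : ℝ)*(M^(2*j+1)*M^2) * ((M+2+J)*(B+1+J)) =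
          ((n.choose (m+1+j) : ℝ)*(B-1-J))*((B+1+J)*(M^(2*j+1)*M^2)) := by
        linear_combination ((B+1+J)*(M^(2*j+1)*M^2)) * e1
      have expand2 : (n.choose (m-(j+1)) : ℝ)*(B^(2*j+1)*B^2) * ((M+2+J)*(B+1+J)) =
          ((n.choose (m-j) : ℝ)*(M-J))*((M+2+J)*(B^(2*j+1)*B^2)) := by
        linear_combination (-(M+2+J)*(B^(2*j+1)*B^2)) * e2
      rw [expand1, expand2]
      have hBJ : (0:ℝ) ≤ B-1-J := by linarith
      calc ((n.choose (m+1+j) : ℝ)*(B-1-J))*((B+1+J)*(M^(2*j+1)*M^2))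
          = ((n.choose (m+1+j) : ℝ)*M^(2*j+1)) * ((B-1-J)*(B+1+J)*M^2) := by ring
        _ ≤ ((n.choose (m-j) : ℝ)*B^(2*j+1)) * ((B-1-J)*(B+1+J)*M^2) := by
            refine mul_le_mul_of_nonneg_right IH ?_
            have : (0:ℝ) ≤ B+1+J := by linarith
            positivity
        _ ≤ ((n.choose (m-j) : ℝ)*B^(2*j+1)) * ((M-J)*(M+2+J)*B^2) := by
            refine mul_le_mul_of_nonneg_left scalar (by positivity)
        _ = ((n.choose (m-j) : ℝ)*(M-J))*((M+2+J)*(B^(2*j+1)*B^2)) := by ring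

lemma caseA (n m : ℕ) (q : ℝ) (hm1 : 1 ≤ m) (hmn : m+1 ≤ n) (h2m : n ≤ 2*m)
    (hq0 : 0 ≤ q) (hq1 : q ≤ 1) (hmean : (n:ℝ) * q ≤ (m:ℝ)) : 1/2 ≤ S n (m+1) q := by
  set p : ℕ → ℝ := fun i => (n.choose i : ℝ) * q ^ i * (1 - q) ^ (n - i) with hp
  have hq1' : (0:ℝ) ≤ 1 - q := by linarith
  have hpnn : ∀ i, 0 ≤ p i := fun i => by rw [hp]; positivity
  -- split total sum
  have hsplit : S n (m+1) q + ∑ i ∈ Finset.Ico (m+1) (n+1), p i = 1 := by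
    rw [← sum_pmf n q]
    show (∑ i ∈ Finset.range (m+1), p i) + _ = ∑ i ∈ Finset.range (n+1), p i
    rw [Finset.range_eq_Ico, Finset.range_eq_Ico]
    exact Finset.sum_Ico_consecutive _ (by omega) (by omega)
  -- reindex upper tail
  have hre : ∑ i ∈ Finset.Ico (m+1) (n+1), p i = ∑ j ∈ Finset.range (n-m), p (m+1+j) := by
    have hnm : n+1-(m+1) = n-m := by omega
    rw [Finset.sum_Ico_eq_sum_range, hnm]
  -- termwise bound
  have hterm : ∀ j ∈ Finset.range (n-m), p (m+1+j) ≤ p (m-j) := by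
    intro j hj
    rw [Finset.mem_range] at hj
    have hjb : j+1 ≤ n-m := by omega
    have hjm : j+1 ≤ m := by omega
    have hpair := pairing n m hm1 hmn h2m j
    have hqb : q * ((n-m:ℕ):ℝ) ≤ (1-q) * (m:ℝ) := by
      have hB : ((n-m:ℕ):ℝ) = (n:ℝ) - (m:ℝ) := by rw [Nat.cast_sub (by omega)]
      rw [hB]; nlinarith
    have hqbnn : (0:ℝ) ≤ q * ((n-m:ℕ):ℝ) := mul_nonneg hq0 (Nat.cast_nonneg _)
    have hmb0 : (0:ℝ) < (m:ℝ) * ((n-m:ℕ):ℝ) := by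
      have h1 : (0:ℝ) < (m:ℝ) := by exact_mod_cast hm1
      have h2 : (0:ℕ) < n-m := by omega
      have h2' : (0:ℝ) < ((n-m:ℕ):ℝ) := by exact_mod_cast h2
      positivity
    -- reduced inequality
    have hred : (n.choose (m+1+j) : ℝ) * q^(2*j+1) ≤ (n.choose (m-j) : ℝ) * (1-q)^(2*j+1) := by
      have hc : (0:ℝ) < ((m:ℝ) * ((n-m:ℕ):ℝ))^(2*j+1) := by positivity
      refine le_of_mul_le_mul_right ?_ hc
      have hqpow : (q * ((n-m:ℕ):ℝ))^(2*j+1) ≤ ((1-q) * (m:ℝ))^(2*j+1) :=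
        pow_le_pow_left₀ hqbnn hqb _
      calc (n.choose (m+1+j) : ℝ) * q^(2*j+1) * ((m:ℝ) * ((n-m:ℕ):ℝ))^(2*j+1)
          = ((n.choose (m+1+j) : ℝ) * (m:ℝ)^(2*j+1)) * (q * ((n-m:ℕ):ℝ))^(2*j+1) := by
            rw [mul_pow, mul_pow]; ring
        _ ≤ ((n.choose (m-j) : ℝ) * ((n-m:ℕ):ℝ)^(2*j+1)) * ((1-q) * (m:ℝ))^(2*j+1) := by
            refine mul_le_mul hpair hqpow (by positivity) ?_
            exact mul_nonneg (Nat.cast_nonneg _) (by positivity)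
        _ = (n.choose (m-j) : ℝ) * (1-q)^(2*j+1) * ((m:ℝ) * ((n-m:ℕ):ℝ))^(2*j+1) := by
            rw [mul_pow, mul_pow]; ring
    -- multiply by the common factor
    have hD : (0:ℝ) ≤ q^(m-j) * (1-q)^(n-m-1-j) := by positivity
    have hmul := mul_le_mul_of_nonneg_right hred hD
    have eL : (n.choose (m+1+j) : ℝ) * q^(2*j+1) * (q^(m-j) * (1-q)^(n-m-1-j)) = p (m+1+j) := by
      have e1 : q^(2*j+1) * q^(m-j) = q^(m+1+j) := by
        rw [← pow_add]; congr 1; omega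
      have e2 : n - (m+1+j) = n-m-1-j := by omega
      calc (n.choose (m+1+j) : ℝ) * q^(2*j+1) * (q^(m-j) * (1-q)^(n-m-1-j))
          = (n.choose (m+1+j) : ℝ) * (q^(2*j+1) * q^(m-j)) * (1-q)^(n-m-1-j) := by ring
        _ = p (m+1+j) := by rw [e1, hp]; simp only []; rw [e2]
    have eR : (n.choose (m-j) : ℝ) * (1-q)^(2*j+1) * (q^(m-j) * (1-q)^(n-m-1-j)) = p (m-j) := by
      have e1 : (1-q)^(2*j+1) * (1-q)^(n-m-1-j) = (1-q)^(n-(m-j)) := by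
        rw [← pow_add]; congr 1; omega
      calc (n.choose (m-j) : ℝ) * (1-q)^(2*j+1) * (q^(m-j) * (1-q)^(n-m-1-j))
          = (n.choose (m-j) : ℝ) * q^(m-j) * ((1-q)^(2*j+1) * (1-q)^(n-m-1-j)) := by ring
        _ = p (m-j) := by rw [e1, hp]
    rw [← eL, ← eR]
    exact hmul
  -- sum the termwise bounds
  have hsum2 : ∑ j ∈ Finset.range (n-m), p (m+1+j) ≤ ∑ j ∈ Finset.range (n-m), p (m-j) :=
    Finset.sum_le_sum hterm
  -- reindexed lower sum is part of S
  have hinj : ∀ x ∈ Finset.range (n-m), ∀ y ∈ Finset.range (n-m), m - x = m - y → x = y := by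
    intro x hx y hy hxy
    rw [Finset.mem_range] at hx hy
    omega
  have himg : ∑ j ∈ Finset.range (n-m), p (m-j) = ∑ i ∈ (Finset.range (n-m)).image (fun j => m - j), p i :=
    (Finset.sum_image hinj).symm
  have hsub : (Finset.range (n-m)).image (fun j => m - j) ⊆ Finset.range (m+1) := by
    intro i hi
    rw [Finset.mem_image] at hi
    obtain ⟨j, hj, rfl⟩ := hi
    rw [Finset.mem_range] at *
    omega
  have hle : ∑ i ∈ (Finset.range (n-m)).image (fun j => m - j), p i ≤ S n (m+1) q := by
    refine Finset.sum_le_sum_of_subset_of_nonneg hsub fun i _ _ => hpnn i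
  linarith [hsplit, hre, hsum2, himg, hle]

lemma caseB (n m : ℕ) (q : ℝ) (hm1 : 1 ≤ m) (hmn : m+1 ≤ n) (h2m : 2*m < n)
    (hq0 : 0 ≤ q) (hmean : (n:ℝ)*q ≤ (m:ℝ)) : 1/2 ≤ S n (m+1) q := by
  have hn0 : (0:ℝ) < n := by exact_mod_cast (by omega : 0 < n)
  have hm0 : (0:ℝ) < m := by exact_mod_cast hm1
  set c : ℝ := (m:ℝ)/(n:ℝ) with hc
  have hc0 : 0 ≤ c := by positivity
  have hqc : q ≤ c := by
    rw [hc, le_div_iff₀ hn0]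
    linarith [hmean]
  have hc2 : c + c ≤ 1 := by
    rw [hc, ← add_div, div_le_one hn0]
    have : (2*m : ℕ) ≤ n := by omega
    have := (Nat.cast_le (α := ℝ)).mpr this
    push_cast at this
    linarith
  have hc1 : c ≤ 1 := by linarith
  set g : ℝ → ℝ := fun t => t^m * (1-t)^(n-m-1) with hg
  have hgnn : ∀ t : ℝ, 0 ≤ t → t ≤ 1 → 0 ≤ g t := by
    intro t h0 h1
    have : (0:ℝ) ≤ 1 - t := by linarith
    rw [hg]
    positivity
  set K : ℝ := ((n-m:ℕ):ℝ) * (n.choose m : ℝ) with hK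
  have hKnn : 0 ≤ K := by rw [hK]; positivity
  have hIq := ident n m hmn q
  have hI1 := ident n m hmn 1
  have hS1 : S n (m+1) 1 = 0 := by
    rw [S]
    refine Finset.sum_eq_zero fun i hi => ?_
    rw [Finset.mem_range] at hi
    have : (1:ℝ) - 1 = 0 := by ring
    rw [this, zero_pow (by omega : n - i ≠ 0)]
    ring
  rw [hS1] at hI1
  have hKT : K * ∫ t in (0:ℝ)..1, g t = 1 := by
    rw [hg]; rw [← hK] at hI1; linarith [hI1]
  -- A ≤ C
  have hsplit1 : (∫ t in (0:ℝ)..q, g t) + (∫ t in q..c, g t) = ∫ t in (0:ℝ)..c, g t :=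
    integral_add_adjacent_intervals (intg m (n-m-1) 0 q) (intg m (n-m-1) q c)
  have hnn_qc : 0 ≤ ∫ t in q..c, g t :=
    integral_nonneg hqc (fun t ht => hgnn t (le_trans hq0 ht.1) (le_trans ht.2 hc1))
  -- reflection pointwise
  have hrefl : ∀ x ∈ Set.Icc (0:ℝ) c, g (c - x) ≤ g (x + c) := by
    intro x hx
    obtain ⟨hx0, hxc⟩ := hx
    set X : ℝ := (n:ℝ) * x with hX
    have hX0 : 0 ≤ X := by rw [hX]; positivity
    have hXM : X ≤ (m:ℝ) := by
      rw [hX]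
      calc (n:ℝ) * x ≤ (n:ℝ) * c := by nlinarith
        _ = m := by rw [hc]; field_simp
    have hbM : ((n-m:ℕ):ℝ) = (n:ℝ) - (m:ℝ) := by
      rw [Nat.cast_sub (by omega : m ≤ n)]
    have base := refl_pt m (n-m) hm1 (by omega : m < n-m) X hX0 hXM
    rw [hbM] at base
    have e1 : c - x = ((m:ℝ) - X)/n := by rw [hc, hX]; field_simp
    have e2 : 1 - (c - x) = (((n:ℝ) - m) + X)/n := by rw [hc, hX]; field_simp; ring
    have e3 : x + c = ((m:ℝ) + X)/n := by rw [hc, hX]; field_simp; ring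
    have e4 : 1 - (x + c) = (((n:ℝ) - m) - X)/n := by rw [hc, hX]; field_simp; ring
    rw [hg]
    simp only []
    rw [e2, e4, e1, e3, div_pow, div_pow, div_pow, div_pow]
    rw [div_mul_div_comm, div_mul_div_comm]
    have hpos : (0:ℝ) < (n:ℝ)^m * (n:ℝ)^(n-m-1) := by positivity
    exact (div_le_div_iff_of_pos_right hpos).mpr base
  -- reindex the two reflected integrals
  have h1 : (∫ x in (0:ℝ)..c, g (c - x)) = ∫ t in (0:ℝ)..c, g t := by
    rw [intervalIntegral.integral_comp_sub_left g c]
    norm_num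
  have h2 : (∫ x in (0:ℝ)..c, g (x + c)) = ∫ t in c..(c+c), g t := by
    rw [intervalIntegral.integral_comp_add_right g c]
    norm_num
  have hcontg : Continuous g := cont_g m (n-m-1)
  have hmono : (∫ x in (0:ℝ)..c, g (c - x)) ≤ ∫ x in (0:ℝ)..c, g (x + c) := by
    apply intervalIntegral.integral_mono_on hc0
    · exact (hcontg.comp (continuous_const.sub continuous_id)).intervalIntegrable 0 c
    · exact (hcontg.comp (continuous_id.add continuous_const)).intervalIntegrable 0 c
    · exact hrefl
  have hsplit3 : (∫ t in c..(c+c), g t) + (∫ t in (c+c)..1, g t) = ∫ t in c..1, g t :=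
    integral_add_adjacent_intervals (intg m (n-m-1) c (c+c)) (intg m (n-m-1) (c+c) 1)
  have hnn_tail : 0 ≤ ∫ t in (c+c)..1, g t :=
    integral_nonneg hc2 (fun t ht => hgnn t (le_trans (by linarith) ht.1) ht.2)
  have hsplit2 : (∫ t in (0:ℝ)..c, g t) + (∫ t in c..1, g t) = ∫ t in (0:ℝ)..1, g t :=
    integral_add_adjacent_intervals (intg m (n-m-1) 0 c) (intg m (n-m-1) c 1)
  -- combine
  have hCD : 2 * (∫ t in (0:ℝ)..c, g t) ≤ ∫ t in (0:ℝ)..1, g t := by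
    have hCE : (∫ t in (0:ℝ)..c, g t) ≤ ∫ t in c..(c+c), g t := by
      rw [← h1, ← h2]; exact hmono
    linarith
  have hAC : (∫ t in (0:ℝ)..q, g t) ≤ ∫ t in (0:ℝ)..c, g t := by linarith
  have hKA : K * (∫ t in (0:ℝ)..q, g t) ≤ 1/2 := by
    have t1 : K * (∫ t in (0:ℝ)..q, g t) ≤ K * (∫ t in (0:ℝ)..c, g t) :=
      mul_le_mul_of_nonneg_left hAC hKnn
    have t2 : K * (2 * ∫ t in (0:ℝ)..c, g t) ≤ K * ∫ t in (0:ℝ)..1, g t :=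
      mul_le_mul_of_nonneg_left hCD hKnn
    rw [hKT] at t2
    linarith
  rw [hIq, ← hK]
  rw [hg] at hKA
  linarith [hKA]

lemma key (n k : ℕ) (q : ℝ) (hk : 2 ≤ k) (hkn : k ≤ n) (hq0 : 0 ≤ q) (hq1 : q ≤ 1)
    (hmean : (n:ℝ) * q ≤ (k:ℝ) - 1) : 1/2 ≤ S n k q := by
  obtain ⟨m, rfl⟩ : ∃ m, k = m + 1 := ⟨k-1, by omega⟩
  have hm1 : 1 ≤ m := by omega
  have hmn : m + 1 ≤ n := hkn
  have hmean' : (n:ℝ) * q ≤ (m:ℝ) := by push_cast at hmean; linarith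
  rcases le_or_gt n (2*m) with hA | hB
  · exact caseA n m q hm1 hmn hA hq0 hq1 hmean'
  · exact caseB n m q hm1 hmn hB hq0 hmean'

lemma S_nonneg (n k : ℕ) (q : ℝ) (hq0 : 0 ≤ q) (hq1 : q ≤ 1) : 0 ≤ S n k q := by
  refine Finset.sum_nonneg fun i _ => ?_
  have : (0:ℝ) ≤ 1 - q := by linarith
  positivity

theorem tree_lower_bound (n k H : ℕ) (δ p : ℝ)
    (hk : 2 ≤ k) (hkn : k ≤ n) (hH : 2 ≤ H) (hδ0 : 0 < δ) (hδ1 : δ < 1 / 8)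
    (hp0 : 0 ≤ p) (hp1 : p ≤ 1) :
    ((n : ℝ) * p ^ (H - 1) ≤ (k : ℝ) - 1 →
      (1 : ℝ) / 4 ≤ (∑ l ∈ Finset.range H, (2 : ℝ) ^ (l + 1) *
          ∑ i ∈ Finset.range k, (n.choose i : ℝ) * (p ^ l) ^ i * (1 - p ^ l) ^ (n - i)) /
          ((2 : ℝ) ^ (H + 1) - 1) ∧ δ < (1 : ℝ) / 4) ∧
    ((∑ l ∈ Finset.range H, (2 : ℝ) ^ (l + 1) *
          ∑ i ∈ Finset.range k, (n.choose i : ℝ) * (p ^ l) ^ i * (1 - p ^ l) ^ (n - i)) /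
          ((2 : ℝ) ^ (H + 1) - 1) ≤ δ →
      (((k : ℝ) - 1) / (n : ℝ)) ^ ((1 : ℝ) / ((H : ℝ) - 1)) < p) := by
  have h2H : (0:ℝ) < 2 ^ H := by positivity
  have hden : (0:ℝ) < (2:ℝ) ^ (H + 1) - 1 := by
    have : (1:ℝ) < 2 ^ (H+1) := one_lt_pow₀ (by norm_num) (by omega)
    linarith
  have part1 : (n : ℝ) * p ^ (H - 1) ≤ (k : ℝ) - 1 →
      (1 : ℝ) / 4 ≤ (∑ l ∈ Finset.range H, (2 : ℝ) ^ (l + 1) *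
          ∑ i ∈ Finset.range k, (n.choose i : ℝ) * (p ^ l) ^ i * (1 - p ^ l) ^ (n - i)) /
          ((2 : ℝ) ^ (H + 1) - 1) := by
    intro h
    have hq0 : (0:ℝ) ≤ p ^ (H-1) := pow_nonneg hp0 _
    have hq1 : p ^ (H-1) ≤ 1 := pow_le_one₀ hp0 hp1
    have hkey := key n k (p ^ (H-1)) hk hkn hq0 hq1 h
    have hterm : (2:ℝ) ^ ((H-1) + 1) * S n k (p ^ (H-1)) ≤
        ∑ l ∈ Finset.range H, (2 : ℝ) ^ (l + 1) * S n k (p ^ l) := by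
      refine Finset.single_le_sum (f := fun l => (2:ℝ) ^ (l+1) * S n k (p ^ l))
        (fun l _ => mul_nonneg (by positivity) (S_nonneg n k _ (pow_nonneg hp0 _) (pow_le_one₀ hp0 hp1))) ?_
      simp [Finset.mem_range]; omega
    have hHe : (H - 1) + 1 = H := by omega
    rw [hHe] at hterm
    have hsum : (2:ℝ)^H * (1/2) ≤ ∑ l ∈ Finset.range H, (2 : ℝ) ^ (l + 1) * S n k (p ^ l) := by
      calc (2:ℝ)^H * (1/2) ≤ (2:ℝ)^H * S n k (p ^ (H-1)) := by
            exact mul_le_mul_of_nonneg_left hkey (le_of_lt h2H)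
        _ ≤ _ := hterm
    have hpow : (2:ℝ) ^ (H+1) = 2 * 2 ^ H := by rw [pow_succ]; ring
    rw [le_div_iff₀ hden]
    simp only [S] at hsum
    linarith
  refine ⟨fun h => ⟨part1 h, by linarith⟩, fun hle => ?_⟩
  by_contra hcon
  push_neg at hcon
  have hn0 : (0:ℝ) < n := by
    have : (0:ℕ) < n := by omega
    exact_mod_cast this
  have hH1 : ((H - 1 : ℕ) : ℝ) = (H:ℝ) - 1 := by
    have : 1 ≤ H := by omega
    push_cast [Nat.cast_sub this]
    ring
  have hb0 : (0:ℝ) ≤ ((k:ℝ) - 1) / n := by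
    have hk1 : (1:ℝ) ≤ k := by exact_mod_cast (by omega : 1 ≤ k)
    apply div_nonneg (by linarith) (le_of_lt hn0)
  have hHne : (H:ℝ) - 1 ≠ 0 := by
    have : (2:ℝ) ≤ H := by exact_mod_cast hH
    linarith
  have hple : p ^ (H - 1) ≤ ((k:ℝ) - 1) / n := by
    calc p ^ (H-1) ≤ ((((k:ℝ) - 1) / n) ^ ((1:ℝ)/((H:ℝ)-1))) ^ (H-1) :=
          pow_le_pow_left₀ hp0 hcon _
      _ = ((k:ℝ) - 1) / n := by
          rw [← Real.rpow_natCast ((((k:ℝ) - 1) / n) ^ ((1:ℝ)/((H:ℝ)-1))) (H-1),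
            ← Real.rpow_mul hb0, hH1, one_div, inv_mul_cancel₀ hHne, Real.rpow_one]
  have hmean : (n : ℝ) * p ^ (H - 1) ≤ (k : ℝ) - 1 := by
    have := mul_le_mul_of_nonneg_left hple (le_of_lt hn0)
    rwa [mul_div_cancel₀ _ (ne_of_gt hn0)] at this
  have := part1 hmean
  linarith
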